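/- Let (D, S) be a summation on R to E. The following are equivalent: (i) there exists a multiplicative summation (D′, S′) on R to E with D ⊆ D′ and S′ restricted to D equal to S (i.e., S is weakly multiplicative); (ii) for every ℓ ∈ ℕ, every family of lengths k₁, …, k_ℓ ∈ ℕ, and every family of series X_{i,j} ∈ D (1 ≤ i ≤ ℓ, 1 ≤ j ≤ kᵢ) such that Σ_{i=1}^{ℓ} Π_{j=1}^{kᵢ} X_{i,j} = 0 in R[[σ]], one has Σ_{i=1}^{ℓ} Π_{j=1}^{kᵢ} S(X_{i,j}) = 0 in E. -/

import Mathlib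

/-- A summation on a commutative ring `R` to a commutative `R`-algebra `E`:
an `R`-submodule `D` of `R[[σ]]` containing all polynomials, together with a map
`S` (whose values are only meaningful on `D`) which is `R`-linear on `D`,
sums `1` to `1`, and is invariant under multiplication by `1 - σ`. -/
structure Summation (R E : Type*) [CommRing R] [CommRing E] [Algebra R E] where
  D : Submodule R (PowerSeries R)
  S : PowerSeries R → E
  S_add : ∀ X ∈ D, ∀ Y ∈ D, S (X + Y) = S X + S Y
  S_smul : ∀ (r : R), ∀ X ∈ D, S (r • X) = r • S X
  poly_mem : ∀ F : Polynomial R, (F : PowerSeries R) ∈ D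
  S_one : S 1 = 1
  shift_mem : ∀ X ∈ D, (1 - PowerSeries.X) * X ∈ D
  S_shift : ∀ X ∈ D, S ((1 - PowerSeries.X) * X) = 0

/-- `X` telescopes over the summation `𝒮` to the value `x`. -/
def Telescopes {R E : Type*} [CommRing R] [CommRing E] [Algebra R E]
    (𝒮 : Summation R E) (X : PowerSeries R) (x : E) : Prop :=
  ∃ (F : Polynomial R) (A : PowerSeries R), A ∈ 𝒮.D ∧
    A = (F : PowerSeries R) * X ∧
    𝒮.S (F : PowerSeries R) ∈ nonZeroDivisors E ∧
    𝒮.S A = 𝒮.S (F : PowerSeries R) * x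

/-- A multiplicative summation: the domain is moreover an `R`-subalgebra of `R[[σ]]`
and `S` is an `R`-algebra homomorphism on it. -/
structure MulSummation (R E : Type*) [CommRing R] [CommRing E] [Algebra R E]
    extends Summation R E where
  mul_mem : ∀ X ∈ D, ∀ Y ∈ D, X * Y ∈ D
  S_mul : ∀ X ∈ D, ∀ Y ∈ D, S (X * Y) = S X * S Y

namespace SummationAux

variable {R E : Type*} [CommRing R] [CommRing E] [Algebra R E]

lemma S_zero (𝒮 : Summation R E) : 𝒮.S 0 = 0 := by
  have := 𝒮.S_smul 0 0 𝒮.D.zero_mem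
  simpa using this

lemma one_mem (𝒮 : Summation R E) : (1 : PowerSeries R) ∈ 𝒮.D := by
  simpa using 𝒮.poly_mem 1

lemma C_mem (𝒮 : Summation R E) (r : R) : (PowerSeries.C r) ∈ 𝒮.D := by
  simpa using 𝒮.poly_mem (Polynomial.C r)

lemma S_C (𝒮 : Summation R E) (r : R) : 𝒮.S (PowerSeries.C r) = algebraMap R E r := by
  have h : (PowerSeries.C r) = r • (1 : PowerSeries R) := by
    rw [← Algebra.algebraMap_eq_smul_one]; rfl
  rw [h, 𝒮.S_smul r 1 (one_mem 𝒮), 𝒮.S_one, Algebra.algebraMap_eq_smul_one]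

lemma S_sum (𝒮 : Summation R E) {ι : Type*} (s : Finset ι) (f : ι → PowerSeries R)
    (hf : ∀ i ∈ s, f i ∈ 𝒮.D) : 𝒮.S (∑ i ∈ s, f i) = ∑ i ∈ s, 𝒮.S (f i) := by
  classical
  induction s using Finset.cons_induction with
  | empty => simpa using S_zero 𝒮
  | cons a s ha ih =>
    rw [Finset.sum_cons, Finset.sum_cons,
      𝒮.S_add _ (hf a (Finset.mem_cons_self a s))
        _ (Submodule.sum_mem _ fun i hi => hf i (Finset.mem_cons_of_mem hi)),
      ih (fun i hi => hf i (Finset.mem_cons_of_mem hi))]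

lemma prod_mem (𝒮 : MulSummation R E) {ι : Type*} (s : Finset ι) (f : ι → PowerSeries R)
    (hf : ∀ i ∈ s, f i ∈ 𝒮.D) : ∏ i ∈ s, f i ∈ 𝒮.D :=
  Finset.prod_induction f (· ∈ 𝒮.D) (fun a b ha hb => 𝒮.mul_mem a ha b hb)
    (one_mem 𝒮.toSummation) hf

lemma S_prod (𝒮 : MulSummation R E) {ι : Type*} (s : Finset ι) (f : ι → PowerSeries R)
    (hf : ∀ i ∈ s, f i ∈ 𝒮.D) : 𝒮.S (∏ i ∈ s, f i) = ∏ i ∈ s, 𝒮.S (f i) := by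
  classical
  induction s using Finset.cons_induction with
  | empty => simpa using 𝒮.S_one
  | cons a s ha ih =>
    rw [Finset.prod_cons, Finset.prod_cons,
      𝒮.S_mul _ (hf a (Finset.mem_cons_self a s))
        _ (prod_mem 𝒮 s f fun i hi => hf i (Finset.mem_cons_of_mem hi)),
      ih (fun i hi => hf i (Finset.mem_cons_of_mem hi))]

lemma multiset_prod_map {α β : Type*} [CommMonoid β] (m : α →₀ ℕ) (g : α → β) :
    (m.toMultiset.toList.map g).prod = m.prod fun a n => g a ^ n := by
  have h1 : (↑(m.toMultiset.toList.map g) : Multiset β) = m.toMultiset.map g := by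
    rw [← Multiset.map_coe, Multiset.coe_toList]
  calc (m.toMultiset.toList.map g).prod
      = (↑(m.toMultiset.toList.map g) : Multiset β).prod := (Multiset.prod_coe _).symm
    _ = (m.toMultiset.map g).prod := by rw [h1]
    _ = m.prod fun a n => g a ^ n := by
        rw [Finsupp.toMultiset_map, Finsupp.prod_toMultiset,
          Finsupp.prod_mapDomain_index (fun b => pow_zero b) (fun b m1 m2 => pow_add b m1 m2)]

/-- Condition (ii). -/
def Hyp (𝒮 : Summation R E) : Prop :=
  ∀ (ℓ : ℕ) (k : Fin ℓ → ℕ) (X : (i : Fin ℓ) → Fin (k i) → PowerSeries R),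
      (∀ i j, X i j ∈ 𝒮.D) →
      (∑ i : Fin ℓ, ∏ j : Fin (k i), X i j) = 0 →
      (∑ i : Fin ℓ, ∏ j : Fin (k i), 𝒮.S (X i j)) = 0

lemma list_version {𝒮 : Summation R E} (h : Hyp 𝒮) (l : List (List (PowerSeries R)))
    (hmem : ∀ x ∈ l, ∀ y ∈ x, y ∈ 𝒮.D) (hsum : (l.map List.prod).sum = 0) :
    ((l.map (List.map 𝒮.S)).map List.prod).sum = 0 := by
  have h1 := h l.length (fun i => (l.get i).length) (fun i j => (l.get i).get j)
    (fun i j => hmem _ (l.get_mem i) _ ((l.get i).get_mem j))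
  simp only [List.get_eq_getElem, Fin.prod_univ_getElem, Fin.prod_univ_fun_getElem,
    Fin.sum_univ_fun_getElem] at h1
  have h2 := h1 hsum
  rw [List.map_map, ← Fin.sum_univ_fun_getElem]
  exact h2

variable (𝒮 : Summation R E)

/-- Evaluation of multivariate polynomials over `D` in `R[[σ]]`. -/
noncomputable def phi : MvPolynomial 𝒮.D R →ₐ[R] PowerSeries R :=
  MvPolynomial.aeval (fun d => (d : PowerSeries R))

/-- Evaluation of multivariate polynomials over `D` in `E` via `S`. -/
noncomputable def psi : MvPolynomial 𝒮.D R →ₐ[R] E :=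
  MvPolynomial.aeval (fun d => 𝒮.S d)

lemma phi_monomial (m : 𝒮.D →₀ ℕ) (c : R) :
    phi 𝒮 (MvPolynomial.monomial m c)
      = PowerSeries.C c * m.prod fun d n => (d : PowerSeries R) ^ n := by
  rw [phi, MvPolynomial.aeval_monomial]
  rfl

lemma psi_monomial (m : 𝒮.D →₀ ℕ) (c : R) :
    psi 𝒮 (MvPolynomial.monomial m c)
      = algebraMap R E c * m.prod fun d n => 𝒮.S d ^ n := by
  rw [psi, MvPolynomial.aeval_monomial]

lemma ker {𝒮 : Summation R E} (h : Hyp 𝒮) (P : MvPolynomial 𝒮.D R)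
    (hP : phi 𝒮 P = 0) : psi 𝒮 P = 0 := by
  classical
  set l : List (List (PowerSeries R)) :=
    P.support.toList.map (fun m => (PowerSeries.C (P.coeff m)) ::
      (m.toMultiset.toList.map (fun d : 𝒮.D => d.1))) with hl
  have hmem : ∀ x ∈ l, ∀ y ∈ x, y ∈ 𝒮.D := by
    intro x hx y hy
    rw [hl, List.mem_map] at hx
    obtain ⟨m, _, rfl⟩ := hx
    rcases List.mem_cons.mp hy with h1 | h1
    · rw [h1]; exact C_mem 𝒮 _
    · rw [List.mem_map] at h1
      obtain ⟨d, _, rfl⟩ := h1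
      exact d.2
  have key1 : (l.map List.prod).sum = phi 𝒮 P := by
    rw [hl, List.map_map, Finset.sum_map_toList]
    calc ∑ m ∈ P.support, (List.prod ∘ fun m => (PowerSeries.C (P.coeff m)) ::
          (m.toMultiset.toList.map (fun d : 𝒮.D => d.1))) m
        = ∑ m ∈ P.support, phi 𝒮 (MvPolynomial.monomial m (P.coeff m)) := by
          refine Finset.sum_congr rfl fun m _ => ?_
          simp only [Function.comp_apply, List.prod_cons, multiset_prod_map, phi_monomial]
      _ = phi 𝒮 P := by rw [← map_sum, MvPolynomial.support_sum_monomial_coeff]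
  have key2 : ((l.map (List.map 𝒮.S)).map List.prod).sum = psi 𝒮 P := by
    rw [hl, List.map_map, List.map_map, Finset.sum_map_toList]
    calc ∑ m ∈ P.support, (List.prod ∘ List.map 𝒮.S ∘ fun m => (PowerSeries.C (P.coeff m)) ::
          (m.toMultiset.toList.map (fun d : 𝒮.D => d.1))) m
        = ∑ m ∈ P.support, psi 𝒮 (MvPolynomial.monomial m (P.coeff m)) := by
          refine Finset.sum_congr rfl fun m _ => ?_
          simp only [Function.comp_apply, List.map_cons, List.prod_cons, List.map_map,
            multiset_prod_map, psi_monomial, S_C]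
      _ = psi 𝒮 P := by rw [← map_sum, MvPolynomial.support_sum_monomial_coeff]
  rw [← key2]
  exact list_version h l hmem (by rw [key1, hP])


open Classical in
/-- The extended summation map, defined by choice of a representation. -/
noncomputable def S' (𝒮 : Summation R E) : PowerSeries R → E :=
  fun X => if h : ∃ P, phi 𝒮 P = X then psi 𝒮 h.choose else 0

lemma S'_phi {𝒮 : Summation R E} (h : Hyp 𝒮) (P : MvPolynomial 𝒮.D R) :
    S' 𝒮 (phi 𝒮 P) = psi 𝒮 P := by
  have hex : ∃ Q, phi 𝒮 Q = phi 𝒮 P := ⟨P, rfl⟩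
  rw [S', dif_pos hex]
  have h0 : phi 𝒮 (hex.choose - P) = 0 := by rw [map_sub, hex.choose_spec, sub_self]
  have := ker h _ h0
  rw [map_sub, sub_eq_zero] at this
  exact this

variable {𝒮 : Summation R E}

lemma phi_X (d : 𝒮.D) : phi 𝒮 (MvPolynomial.X d) = d := by
  rw [phi, MvPolynomial.aeval_X]

lemma psi_X (d : 𝒮.D) : psi 𝒮 (MvPolynomial.X d) = 𝒮.S d := by
  rw [psi, MvPolynomial.aeval_X]

lemma mem_range_of_mem_D {d : PowerSeries R} (hd : d ∈ 𝒮.D) : d ∈ (phi 𝒮).range :=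
  (AlgHom.mem_range _).mpr ⟨MvPolynomial.X ⟨d, hd⟩, phi_X _⟩

lemma S'_eq (h : Hyp 𝒮) (d : PowerSeries R) (hd : d ∈ 𝒮.D) :
    S' 𝒮 d = 𝒮.S d := by
  have h1 := S'_phi h (MvPolynomial.X (⟨d, hd⟩ : 𝒮.D))
  rw [phi_X, psi_X] at h1
  exact h1

lemma one_sub_X_mem (𝒮 : Summation R E) : (1 - PowerSeries.X : PowerSeries R) ∈ 𝒮.D := by
  have := 𝒮.poly_mem (1 - Polynomial.X)
  simpa using this

lemma S_one_sub_X (𝒮 : Summation R E) : 𝒮.S (1 - PowerSeries.X) = 0 := by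
  have := 𝒮.S_shift 1 (one_mem 𝒮)
  simpa using this

lemma S'_add (h : Hyp 𝒮) {X Y : PowerSeries R}
    (hX : X ∈ (phi 𝒮).range) (hY : Y ∈ (phi 𝒮).range) :
    S' 𝒮 (X + Y) = S' 𝒮 X + S' 𝒮 Y := by
  obtain ⟨P, rfl⟩ := (AlgHom.mem_range _).mp hX
  obtain ⟨Q, rfl⟩ := (AlgHom.mem_range _).mp hY
  rw [← map_add, S'_phi h, S'_phi h, S'_phi h, map_add]

lemma S'_smul (h : Hyp 𝒮) (r : R) {X : PowerSeries R} (hX : X ∈ (phi 𝒮).range) :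
    S' 𝒮 (r • X) = r • S' 𝒮 X := by
  obtain ⟨P, rfl⟩ := (AlgHom.mem_range _).mp hX
  rw [← map_smul, S'_phi h, S'_phi h, map_smul]

lemma S'_mul (h : Hyp 𝒮) {X Y : PowerSeries R}
    (hX : X ∈ (phi 𝒮).range) (hY : Y ∈ (phi 𝒮).range) :
    S' 𝒮 (X * Y) = S' 𝒮 X * S' 𝒮 Y := by
  obtain ⟨P, rfl⟩ := (AlgHom.mem_range _).mp hX
  obtain ⟨Q, rfl⟩ := (AlgHom.mem_range _).mp hY
  rw [← map_mul, S'_phi h, S'_phi h, S'_phi h, map_mul]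

lemma S'_one (h : Hyp 𝒮) : S' 𝒮 (1 : PowerSeries R) = 1 := by
  rw [show (1 : PowerSeries R) = phi 𝒮 1 from (map_one _).symm, S'_phi h, map_one]

/-- The extension of `𝒮` to a multiplicative summation, assuming `Hyp`. -/
noncomputable def ext (h : Hyp 𝒮) : MulSummation R E where
  D := Subalgebra.toSubmodule (phi 𝒮).range
  S := S' 𝒮
  S_add := fun X hX Y hY =>
    S'_add h ((Subalgebra.mem_toSubmodule _).mp hX) ((Subalgebra.mem_toSubmodule _).mp hY)
  S_smul := fun r X hX => S'_smul h r ((Subalgebra.mem_toSubmodule _).mp hX)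
  poly_mem := fun F =>
    (Subalgebra.mem_toSubmodule _).mpr (mem_range_of_mem_D (𝒮.poly_mem F))
  S_one := S'_one h
  shift_mem := fun X hX =>
    (Subalgebra.mem_toSubmodule _).mpr
      ((phi 𝒮).range.mul_mem (mem_range_of_mem_D (one_sub_X_mem 𝒮))
        ((Subalgebra.mem_toSubmodule _).mp hX))
  S_shift := by
    intro X hX
    rw [S'_mul h (mem_range_of_mem_D (one_sub_X_mem 𝒮)) ((Subalgebra.mem_toSubmodule _).mp hX),
      S'_eq h _ (one_sub_X_mem 𝒮), S_one_sub_X, zero_mul]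
  mul_mem := fun X hX Y hY =>
    (Subalgebra.mem_toSubmodule _).mpr
      ((phi 𝒮).range.mul_mem ((Subalgebra.mem_toSubmodule _).mp hX)
        ((Subalgebra.mem_toSubmodule _).mp hY))
  S_mul := fun X hX Y hY =>
    S'_mul h ((Subalgebra.mem_toSubmodule _).mp hX) ((Subalgebra.mem_toSubmodule _).mp hY)

end SummationAux

open SummationAux in
theorem weakly_multiplicative_iff {R E : Type*} [CommRing R] [CommRing E] [Algebra R E]
    [Nontrivial R] [Nontrivial E]
    (𝒮 : Summation R E) :
    (∃ 𝒮' : MulSummation R E, 𝒮.D ≤ 𝒮'.D ∧ ∀ X ∈ 𝒮.D, 𝒮'.S X = 𝒮.S X) ↔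
    (∀ (ℓ : ℕ) (k : Fin ℓ → ℕ) (X : (i : Fin ℓ) → Fin (k i) → PowerSeries R),
      (∀ i j, X i j ∈ 𝒮.D) →
      (∑ i : Fin ℓ, ∏ j : Fin (k i), X i j) = 0 →
      (∑ i : Fin ℓ, ∏ j : Fin (k i), 𝒮.S (X i j)) = 0) := by
  constructor
  · rintro ⟨𝒮', hD, hS⟩ ℓ k X hX hsum
    have hmem : ∀ i j, X i j ∈ 𝒮'.D := fun i j => hD (hX i j)
    calc (∑ i : Fin ℓ, ∏ j : Fin (k i), 𝒮.S (X i j))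
        = ∑ i : Fin ℓ, ∏ j : Fin (k i), 𝒮'.S (X i j) := by
          refine Finset.sum_congr rfl fun i _ => Finset.prod_congr rfl fun j _ => ?_
          rw [hS _ (hX i j)]
      _ = ∑ i : Fin ℓ, 𝒮'.S (∏ j : Fin (k i), X i j) := by
          refine Finset.sum_congr rfl fun i _ => ?_
          rw [S_prod 𝒮' _ _ fun j _ => hmem i j]
      _ = 𝒮'.S (∑ i : Fin ℓ, ∏ j : Fin (k i), X i j) := by
          rw [S_sum 𝒮'.toSummation _ _
            fun i _ => prod_mem 𝒮' _ _ fun j _ => hmem i j]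
      _ = 0 := by rw [hsum, S_zero]
  · intro h
    refine ⟨ext h, fun d hd => (Subalgebra.mem_toSubmodule _).mpr (mem_range_of_mem_D hd), fun X hX => S'_eq h X hX⟩
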